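/- Let R be a nontrivial commutative ring with identity such that Z(R) is an ideal of R and Z(R)² ≠ (0). If for each pair of distinct zero-divisors x, y of R one has ann(x,y) ≠ (0), then the diameter of the zero-divisor graph Γ(R) equals 2. -/

import Mathlib

/-- The set of zero-divisors of a commutative ring (including `0`). -/
def zdSet (R : Type*) [CommRing R] : Set R :=
  {x : R | ∃ y : R, y ≠ 0 ∧ x * y = 0}

/-- The set of nonzero zero-divisors. -/
def zdStar (R : Type*) [CommRing R] : Set R :=
  {x : R | x ≠ 0 ∧ ∃ y : R, y ≠ 0 ∧ x * y = 0}

/-- The zero-divisor graph `Γ(R)`: vertices are the nonzero zero-divisors, and distinct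
`x`, `y` are adjacent iff `x * y = 0`. -/
def zdGraph (R : Type*) [CommRing R] : SimpleGraph (zdStar R) where
  Adj x y := x.1 ≠ y.1 ∧ x.1 * y.1 = 0
  symm := ⟨fun x y h => ⟨h.1.symm, by rw [mul_comm]; exact h.2⟩⟩
  loopless := ⟨fun x h => h.1 rfl⟩

/-- The extended zero-divisor graph `Γ̃(R)`: vertices are the nonzero zero-divisors, and
distinct `x`, `y` are adjacent iff `x * y = 0` or `x + y ∈ Z(R)`. -/
def zdExtGraph (R : Type*) [CommRing R] : SimpleGraph (zdStar R) where
  Adj x y := x.1 ≠ y.1 ∧ (x.1 * y.1 = 0 ∨ x.1 + y.1 ∈ zdSet R)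
  symm := ⟨fun x y h => ⟨h.1.symm, by rw [mul_comm, add_comm]; exact h.2⟩⟩
  loopless := ⟨fun x h => h.1 rfl⟩

universe u

lemma zdStar_subset_zdSet (R : Type u) [CommRing R] : zdStar R ⊆ zdSet R :=
  fun _ hx => hx.2

theorem stmt5 (R : Type u) [CommRing R] [Nontrivial R]
    (hcard : (zdStar R).Nontrivial)
    (hideal : ∃ I : Ideal R, (I : Set R) = zdSet R)
    (hsq : ∃ x ∈ zdSet R, ∃ y ∈ zdSet R, x * y ≠ 0)
    (hann : ∀ x ∈ zdSet R, ∀ y ∈ zdSet R, x ≠ y → ∃ a : R, a ≠ 0 ∧ a * x = 0 ∧ a * y = 0) :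
    (zdGraph R).ediam = 2 := by
  set G := zdGraph R with hG
  -- upper bound
  have hub : G.ediam ≤ 2 := by
    apply SimpleGraph.ediam_le_of_edist_le
    intro u v
    rcases eq_or_ne u v with rfl | huv
    · simp [SimpleGraph.edist_self]
    have huv' : u.1 ≠ v.1 := fun h => huv (Subtype.ext h)
    obtain ⟨a, ha0, hau, hav⟩ := hann u.1 u.2.2 v.1 v.2.2 huv'
    rcases eq_or_ne (u.1 * v.1) 0 with h0 | h0
    · have : G.Adj u v := ⟨huv', h0⟩
      calc G.edist u v ≤ 1 := (SimpleGraph.edist_eq_one_iff_adj.mpr this).le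
        _ ≤ 2 := by norm_num
    · have haS : a ∈ zdStar R := ⟨ha0, u.1, u.2.1, hau⟩
      have hau' : u.1 ≠ a := by
        rintro rfl; exact h0 hav
      have hav' : a ≠ v.1 := by
        rintro rfl; exact h0 (by rw [mul_comm]; exact hau)
      have adj1 : G.Adj u ⟨a, haS⟩ := ⟨hau', by rw [mul_comm]; exact hau⟩
      have adj2 : G.Adj ⟨a, haS⟩ v := ⟨hav', hav⟩
      calc G.edist u v ≤ ((adj1.toWalk.append adj2.toWalk).length : ℕ∞) :=
            SimpleGraph.Walk.edist_le _
        _ = 2 := by simp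
  -- lower bound : find two distinct nonadjacent vertices
  obtain ⟨x, hx, y, hy, hxy⟩ := hsq
  have hx0 : x ≠ 0 := by rintro rfl; exact hxy (by ring)
  have hy0 : y ≠ 0 := by rintro rfl; exact hxy (by ring)
  have hxS : x ∈ zdStar R := ⟨hx0, hx⟩
  have hyS : y ∈ zdStar R := ⟨hy0, hy⟩
  have key : ∃ u v : zdStar R, u.1 ≠ v.1 ∧ u.1 * v.1 ≠ 0 := by
    rcases eq_or_ne x y with rfl | hne
    · -- x = y, x² ≠ 0 ; use x and x + z where x*z = 0, z ≠ 0
      obtain ⟨z, hz0, hxz⟩ := id hx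
      have hw0 : x + z ≠ 0 := by
        intro h
        have : z = -x := by linear_combination h
        rw [this, mul_neg] at hxz
        exact hxy (by linear_combination -hxz)
      have hzS : z ∈ zdSet R := ⟨x, hx0, by rw [mul_comm]; exact hxz⟩
      obtain ⟨I, hI⟩ := hideal
      have hwS : x + z ∈ zdSet R := by
        rw [← hI] at hzS hx ⊢
        exact I.add_mem hx hzS
      obtain ⟨w', hw'0, hww'⟩ := hwS
      refine ⟨⟨x, hxS⟩, ⟨x + z, hw0, w', hw'0, hww'⟩, ?_, ?_⟩
      · simp only [ne_eq, left_eq_add]; exact hz0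
      · intro h
        exact hxy (by linear_combination h - hxz)
    · exact ⟨⟨x, hxS⟩, ⟨y, hyS⟩, hne, hxy⟩
  obtain ⟨u, v, huv, hmul⟩ := key
  have hnadj : ¬ G.Adj u v := fun h => hmul h.2
  have hne : u ≠ v := fun h => huv (by rw [h])
  have hlb : (2 : ℕ∞) ≤ G.edist u v := by
    have h1 : G.edist u v ≠ 0 := by
      exact (SimpleGraph.edist_pos_of_ne hne).ne'
    have h2 : G.edist u v ≠ 1 := fun h =>
      hnadj (SimpleGraph.edist_eq_one_iff_adj.mp h)
    have : 1 < G.edist u v :=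
      lt_of_le_of_ne (Order.one_le_iff_pos.mpr (pos_iff_ne_zero.mpr h1)) (Ne.symm h2)
    exact ENat.add_one_le_iff (by norm_num) |>.mpr this
  exact le_antisymm hub (hlb.trans SimpleGraph.edist_le_ediam)
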